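/- arXiv:2206.04956 — 3 statements merged into one kernel-verified Lean document; each statement's English description precedes it below -/
import Mathlib

section
/- Let d = 3, s = −1, γ ≥ 1, and V := γ|·| (that is, α = 1). Then δ_0, the Dirac unit point mass at the origin of ℝ^3, is the unique minimizer of I_{−1,V} over all Borel probability measures on ℝ^3: I_{−1,V}(δ_0) = 0 and for every Borel probability measure ν ≠ δ_0 one has I_{−1,V}(ν) > 0. -/
open MeasureTheory Real
open scoped ENNReal

noncomputable section

/-- Euclidean space `ℝ^d`. -/
abbrev Esp (d : ℕ) := EuclideanSpace ℝ (Fin d)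

open Classical in
/-- Riesz kernel with values in the extended reals: `K_s(x) = |x|^(-s)` for `s > 0`,
`-|x|^(-s)` for `-2 < s < 0`, `-log |x|` for `s = 0`, with conventions `K_s(0) = +∞`
for `s ≥ 0` and `K_s(0) = 0` for `s < 0`. -/
def rieszK (d : ℕ) (s : ℝ) (x : Esp d) : EReal :=
  if x = 0 then (if 0 ≤ s then (⊤ : EReal) else (0 : EReal))
  else if 0 < s then ((‖x‖ ^ (-s) : ℝ) : EReal)
  else if s = 0 then ((-Real.log ‖x‖ : ℝ) : EReal)
  else ((-(‖x‖ ^ (-s)) : ℝ) : EReal)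

open Classical in
/-- Positive part of an extended real, as an extended nonnegative real. -/
def erealPos (x : EReal) : ℝ≥0∞ := if x = ⊤ then ⊤ else ENNReal.ofReal x.toReal

/-- Energy `I_{s,V}(μ) = ∬ (K_s(x - y) + V x + V y) dμ(x) dμ(y) ∈ [-∞, +∞]`, defined
as the difference of the lower integrals of the positive and negative parts of the
integrand. -/
def energy (d : ℕ) (s : ℝ) (V : Esp d → ℝ) (μ : Measure (Esp d)) : EReal :=
  ((∫⁻ p : Esp d × Esp d,
      erealPos (rieszK d s (p.1 - p.2) + (V p.1 : EReal) + (V p.2 : EReal))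
        ∂(μ.prod μ) : ℝ≥0∞) : EReal)
  - ((∫⁻ p : Esp d × Esp d,
      erealPos (-(rieszK d s (p.1 - p.2) + (V p.1 : EReal) + (V p.2 : EReal)))
        ∂(μ.prod μ) : ℝ≥0∞) : EReal)

/-- The uniform (rotation invariant) Borel probability measure on the centered sphere
of radius `R` in `ℝ^d`, realized as the pushforward of the normalized Lebesgue measure
on the unit ball by the radial projection `x ↦ (R/‖x‖) • x`. -/
def sphereUniform (d : ℕ) (R : ℝ) : Measure (Esp d) :=
  Measure.map (fun x => (R / ‖x‖) • x)
    ((volume (Metric.ball (0 : Esp d) 1))⁻¹ • volume.restrict (Metric.ball (0 : Esp d) 1))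

open Classical in
/-- Real-valued Riesz kernel (junk value `0` at the origin), used for potentials where
the singularity is negligible. -/
def rieszKr (d : ℕ) (s : ℝ) (x : Esp d) : ℝ :=
  if 0 < s then ‖x‖ ^ (-s)
  else if s = 0 then -Real.log ‖x‖
  else -(‖x‖ ^ (-s))

/-- Surface area `|S^(d-1)| = 2 π^(d/2) / Γ(d/2)` of the unit sphere in `ℝ^d`. -/
def surf (d : ℕ) : ℝ := 2 * Real.pi ^ ((d : ℝ) / 2) / Real.Gamma ((d : ℝ) / 2)

/-- The constant `τ_(d-1) = Γ(d/2) / (Γ(1/2) Γ((d-1)/2))` from the Funk-Hecke formula. -/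
def tau (d : ℕ) : ℝ :=
  Real.Gamma ((d : ℝ) / 2) / (Real.Gamma (1 / 2) * Real.Gamma (((d : ℝ) - 1) / 2))

/-- Rising factorial (Pochhammer symbol) `(x)_k = x (x+1) ⋯ (x+k-1)`. -/
def risingFact (x : ℝ) (k : ℕ) : ℝ := (ascPochhammer ℝ k).eval x

/-- Gauss hypergeometric function `₂F₁(a, b; c; z)` as a sum of its defining series. -/
def hyp2F1 (a b c z : ℝ) : ℝ :=
  ∑' k : ℕ, (risingFact a k * risingFact b k) / (risingFact c k * (k.factorial : ℝ)) * z ^ k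

/-- Laplacian on `ℝ^d`: sum of the second partial derivatives along the standard basis. -/
def lap (d : ℕ) (f : Esp d → ℝ) (x : Esp d) : ℝ :=
  ∑ i : Fin d,
    fderiv ℝ (fun y => fderiv ℝ f y (EuclideanSpace.single i 1)) x (EuclideanSpace.single i 1)

/-- Double factorial of an integer, with the convention `k‼ = 1` for `k ≤ 0`. -/
def dfact (k : ℤ) : ℝ := if k ≤ 0 then 1 else (Nat.doubleFactorial k.toNat : ℝ)

/-- The constant `C_(d,n) = (-1)^(n-1) (d-4)‼ (2n-2)‼ / (d-2n-2)‼`. -/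
def Cdn (d n : ℕ) : ℝ :=
  (-1 : ℝ) ^ (n - 1) * dfact ((d : ℤ) - 4) * dfact (2 * (n : ℤ) - 2) / dfact ((d : ℤ) - 2 * n - 2)

/-- The constant `c_d`: `2π` if `d = 2` and `(d-2) · 2 π^(d/2) / Γ(d/2)` otherwise. -/
def cd (d : ℕ) : ℝ :=
  if d = 2 then 2 * Real.pi
  else ((d : ℝ) - 2) * 2 * Real.pi ^ ((d : ℝ) / 2) / Real.Gamma ((d : ℝ) / 2)

/-! ### Auxiliary lemmas for `statement3` -/

private lemma rk_eq (x : Esp 3) : rieszK 3 (-1) x = ((-‖x‖ : ℝ) : EReal) := by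
  rcases eq_or_ne x 0 with h | h
  · simp [rieszK, h]
  · simp only [rieszK, h, if_false]
    norm_num

private lemma g_nonneg (γ : ℝ) (hγ : 1 ≤ γ) (x y : Esp 3) :
    0 ≤ γ * ‖x‖ + γ * ‖y‖ - ‖x - y‖ := by
  have h1 := norm_sub_le x y
  nlinarith [norm_nonneg x, norm_nonneg y]

private lemma integrand_pos_eq (γ : ℝ) (p : Esp 3 × Esp 3) :
    erealPos (rieszK 3 (-1) (p.1 - p.2) + ((γ * ‖p.1‖ : ℝ) : EReal) + ((γ * ‖p.2‖ : ℝ) : EReal))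
      = ENNReal.ofReal (γ * ‖p.1‖ + γ * ‖p.2‖ - ‖p.1 - p.2‖) := by
  rw [rk_eq, ← EReal.coe_add, ← EReal.coe_add]
  unfold erealPos
  rw [if_neg (EReal.coe_ne_top _), EReal.toReal_coe]
  congr 1
  ring

private lemma integrand_neg_eq (γ : ℝ) (hγ : 1 ≤ γ) (p : Esp 3 × Esp 3) :
    erealPos (-(rieszK 3 (-1) (p.1 - p.2) + ((γ * ‖p.1‖ : ℝ) : EReal) + ((γ * ‖p.2‖ : ℝ) : EReal)))
      = 0 := by
  rw [rk_eq, ← EReal.coe_add, ← EReal.coe_add, ← EReal.coe_neg]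
  unfold erealPos
  rw [if_neg (EReal.coe_ne_top _), EReal.toReal_coe]
  rw [ENNReal.ofReal_eq_zero]
  have := g_nonneg γ hγ p.1 p.2
  linarith

private lemma energy_eq (γ : ℝ) (hγ : 1 ≤ γ) (μ : Measure (Esp 3)) :
    energy 3 (-1) (fun x => γ * ‖x‖) μ =
      ((∫⁻ p : Esp 3 × Esp 3,
          ENNReal.ofReal (γ * ‖p.1‖ + γ * ‖p.2‖ - ‖p.1 - p.2‖) ∂(μ.prod μ) : ℝ≥0∞) : EReal) := by
  unfold energy
  simp only [integrand_pos_eq γ, integrand_neg_eq γ hγ, lintegral_zero, EReal.coe_ennreal_zero,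
    sub_zero]

private lemma opp_ray (γ : ℝ) (hγ : 1 ≤ γ) {x y : Esp 3}
    (h : γ * ‖x‖ + γ * ‖y‖ - ‖x - y‖ ≤ 0) : SameRay ℝ x (-y) := by
  have h1 : ‖x - y‖ = ‖x‖ + ‖y‖ := by
    have h2 := norm_sub_le x y
    nlinarith [norm_nonneg x, norm_nonneg y]
  apply sameRay_iff_norm_add.mpr
  rw [norm_neg, ← h1, sub_eq_add_neg]

theorem statement3 (γ : ℝ) (hγ : 1 ≤ γ) :
    energy 3 (-1) (fun x => γ * ‖x‖) (Measure.dirac 0) = 0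
    ∧ ∀ ν : Measure (Esp 3), IsProbabilityMeasure ν → ν ≠ Measure.dirac 0 →
        0 < energy 3 (-1) (fun x => γ * ‖x‖) ν := by
  constructor
  · rw [energy_eq γ hγ, Measure.dirac_prod_dirac, lintegral_dirac]
    simp
  · intro ν hν hne
    rw [energy_eq γ hγ]
    set g : Esp 3 × Esp 3 → ℝ := fun p => γ * ‖p.1‖ + γ * ‖p.2‖ - ‖p.1 - p.2‖ with hg
    have hgc : Continuous g := by
      apply Continuous.sub
      · exact ((continuous_const.mul (continuous_norm.comp continuous_fst)).add
          (continuous_const.mul (continuous_norm.comp continuous_snd)))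
      · exact continuous_norm.comp (continuous_fst.sub continuous_snd)
    have hL : ∫⁻ p, ENNReal.ofReal (g p) ∂(ν.prod ν) ≠ 0 := by
      intro hL0
      -- From zero integral, the integrand vanishes a.e.
      have hmg : Measurable fun p => ENNReal.ofReal (g p) :=
        ENNReal.measurable_ofReal.comp hgc.measurable
      have hae : (fun p => ENNReal.ofReal (g p)) =ᵐ[ν.prod ν] 0 :=
        (lintegral_eq_zero_iff hmg).mp hL0
      have hP : (ν.prod ν) {p | 0 < g p} = 0 := by
        apply measure_mono_null _ (ae_iff.mp hae)
        intro p hp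
        simp only [Set.mem_setOf_eq, Pi.zero_apply, ENNReal.ofReal_eq_zero, not_le]
        exact hp
      have hPm : MeasurableSet {p : Esp 3 × Esp 3 | 0 < g p} :=
        measurableSet_lt measurable_const hgc.measurable
      have hslice : ∀ᵐ x ∂ν, ν (Prod.mk x ⁻¹' {p | 0 < g p}) = 0 :=
        (Measure.measure_prod_null hPm).mp hP
      -- ν gives positive mass to the complement of {0}
      have hA : ν {x : Esp 3 | x ≠ 0} ≠ 0 := by
        intro h0
        apply hne
        have hc : ({(0 : Esp 3)} : Set (Esp 3))ᶜ = {x : Esp 3 | x ≠ 0} := by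
          ext z; simp
        have hν1 : ν {(0 : Esp 3)} = 1 := by
          have h2 := measure_add_measure_compl (μ := ν) (MeasurableSet.singleton (0 : Esp 3))
          rw [hc, h0, add_zero, measure_univ] at h2
          exact h2
        apply Measure.ext
        intro s hs
        rw [Measure.dirac_apply' _ hs]
        by_cases h0s : (0 : Esp 3) ∈ s
        · have hle : (1 : ℝ≥0∞) ≤ ν s := by
            rw [← hν1]
            exact measure_mono (Set.singleton_subset_iff.mpr h0s)
          have : ν s = 1 := le_antisymm prob_le_one hle
          simp [this, Set.indicator_of_mem h0s]
        · have hsub : s ⊆ ({(0 : Esp 3)} : Set (Esp 3))ᶜ := by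
            intro z hz
            simp only [Set.mem_compl_iff, Set.mem_singleton_iff]
            intro hz0
            exact h0s (hz0 ▸ hz)
          have : ν s = 0 := by
            apply measure_mono_null hsub
            rw [hc]; exact h0
          simp [this, Set.indicator_of_notMem h0s]
      -- convert slice statement
      have hsl : ∀ᵐ x ∂ν, ∀ᵐ y ∂ν, g (x, y) ≤ 0 := by
        filter_upwards [hslice] with x hx
        rw [ae_iff]
        apply measure_mono_null _ hx
        intro y hy
        simp only [Set.mem_setOf_eq, not_le] at hy
        exact hy
      -- pick x₁
      obtain ⟨x₁, hx₁A, hx₁⟩ :=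
        Measure.exists_mem_of_measure_ne_zero_of_ae hA (ae_restrict_of_ae hsl)
      -- pick x₂
      obtain ⟨x₂, hx₂A, hx₂, h12⟩ :=
        Measure.exists_mem_of_measure_ne_zero_of_ae hA (ae_restrict_of_ae (hsl.and hx₁))
      -- pick y
      obtain ⟨y, hyA, h1y, h2y⟩ :=
        Measure.exists_mem_of_measure_ne_zero_of_ae hA (ae_restrict_of_ae (hx₁.and hx₂))
      simp only [Set.mem_setOf_eq] at hx₁A hx₂A hyA
      -- geometry
      have r12 : SameRay ℝ x₁ (-x₂) := opp_ray γ hγ h12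
      have r1y : SameRay ℝ x₁ (-y) := opp_ray γ hγ h1y
      have r2y : SameRay ℝ x₂ (-y) := opp_ray γ hγ h2y
      have h2y' : SameRay ℝ (-x₂) y := by
        have := r2y.neg
        rwa [neg_neg] at this
      have h1y' : SameRay ℝ x₁ y :=
        r12.trans h2y' (fun h => absurd (neg_eq_zero.mp h) hx₂A)
      have hyy : SameRay ℝ (-y) y :=
        (r1y.symm).trans h1y' (fun h => absurd h hx₁A)
      obtain ⟨r₁, r₂, hr₁, hr₂, he⟩ := hyy.exists_pos (neg_ne_zero.mpr hyA) hyA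
      apply hyA
      have hsum : (r₁ + r₂) • y = 0 := by
        rw [add_smul]
        rw [smul_neg] at he
        rw [← he]
        abel
      rcases smul_eq_zero.mp hsum with h | h
      · exact absurd h (by positivity)
      · exact h
    have hpos : (0 : ℝ≥0∞) < ∫⁻ p, ENNReal.ofReal (g p) ∂(ν.prod ν) :=
      pos_iff_ne_zero.mpr hL
    exact EReal.coe_ennreal_pos.mpr hpos
end
end

section
/- Let d ≥ 1 be an integer, −2 < s < 0, γ > 0, α > −s, and V := γ|·|^α. Then δ_0, the Dirac unit point mass at the origin of ℝ^d, is not a minimizer of I_{s,V}: there exists a Borel probability measure μ on ℝ^d with I_{s,V}(μ) < I_{s,V}(δ_0) = 0. -/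
open MeasureTheory Real
open scoped ENNReal

noncomputable section

private lemma smul_prodAux {α β : Type*} [MeasurableSpace α] [MeasurableSpace β]
    (c : ℝ≥0∞) (μ : Measure α) (ν : Measure β) [SFinite μ] [SFinite ν] :
    (c • μ).prod ν = c • (μ.prod ν) := by
  ext s hs
  rw [Measure.prod_apply hs, Measure.smul_apply, Measure.prod_apply hs,
    lintegral_smul_measure, smul_eq_mul]

private lemma prod_smulAux {α β : Type*} [MeasurableSpace α] [MeasurableSpace β]
    (c : ℝ≥0∞) (hc : c ≠ ⊤) (μ : Measure α) (ν : Measure β) [SFinite μ] [SFinite ν] :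
    μ.prod (c • ν) = c • (μ.prod ν) := by
  ext s hs
  simp only [Measure.prod_apply hs, Measure.smul_apply, smul_eq_mul]
  rw [lintegral_const_mul' c _ hc]

private lemma erealPos_coe (c : ℝ) : erealPos (c : EReal) = ENNReal.ofReal c := by
  simp [erealPos]

private lemma erealPos_zero : erealPos 0 = 0 := by simp [erealPos]

private lemma coe_quarter_ofReal (c : ℝ) (hc : 0 ≤ c) :
    (((2 : ℝ≥0∞)⁻¹ * 2⁻¹ * ENNReal.ofReal c : ℝ≥0∞) : EReal) = ((4⁻¹ * c : ℝ) : EReal) := by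
  have h : ((2 : ℝ≥0∞)⁻¹ * 2⁻¹ * ENNReal.ofReal c) = ENNReal.ofReal (4⁻¹ * c) := by
    rw [ENNReal.ofReal_mul (by norm_num), ENNReal.ofReal_inv_of_pos (by norm_num),
      ← ENNReal.mul_inv (Or.inl (by norm_num)) (Or.inr (by norm_num))]
    norm_num
  rw [h, EReal.coe_ennreal_ofReal, max_eq_left (by positivity)]

private lemma coe_half_ofReal (c : ℝ) (hc : 0 ≤ c) :
    (((2 : ℝ≥0∞)⁻¹ * ENNReal.ofReal c : ℝ≥0∞) : EReal) = ((2⁻¹ * c : ℝ) : EReal) := by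
  have h : ((2 : ℝ≥0∞)⁻¹ * ENNReal.ofReal c) = ENNReal.ofReal (2⁻¹ * c) := by
    rw [ENNReal.ofReal_mul (by norm_num), ENNReal.ofReal_inv_of_pos (by norm_num)]
    norm_num
  rw [h, EReal.coe_ennreal_ofReal, max_eq_left (by positivity)]

theorem statement18 (d : ℕ) (hd : 1 ≤ d) (s γ α : ℝ)
    (hs1 : -2 < s) (hs2 : s < 0) (hγ : 0 < γ) (hα : -s < α) :
    energy d s (fun x => γ * ‖x‖ ^ α) (Measure.dirac 0) = 0
    ∧ ∃ μ : Measure (Esp d), IsProbabilityMeasure μ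
        ∧ energy d s (fun x => γ * ‖x‖ ^ α) μ
            < energy d s (fun x => γ * ‖x‖ ^ α) (Measure.dirac 0) := by
  have hα0 : 0 < α := by linarith
  have hV0 : γ * ‖(0 : Esp d)‖ ^ α = 0 := by
    simp [Real.zero_rpow hα0.ne']
  have hK0 : rieszK d s 0 = 0 := by simp [rieszK, not_le.mpr hs2]
  -- the value of the integrand at (0,0)
  have hF00 : rieszK d s ((0 : Esp d) - 0) + ((γ * ‖(0 : Esp d)‖ ^ α : ℝ) : EReal)
      + ((γ * ‖(0 : Esp d)‖ ^ α : ℝ) : EReal) = 0 := by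
    rw [sub_zero, hK0, hV0]; simp
  have hEdirac : energy d s (fun x => γ * ‖x‖ ^ α) (Measure.dirac 0) = 0 := by
    unfold energy
    rw [Measure.dirac_prod_dirac, lintegral_dirac, lintegral_dirac]
    simp only [hF00, neg_zero, erealPos_zero]
    simp
  refine ⟨hEdirac, ?_⟩
  -- construction of the two-point measure
  set t : ℝ := α + s with ht
  have htpos : 0 < t := by linarith
  set r : ℝ := ((2 * γ + 1)⁻¹) ^ t⁻¹ with hrdef
  have hrpos : 0 < r := Real.rpow_pos_of_pos (by positivity) _
  have hrt : r ^ t = (2 * γ + 1)⁻¹ := Real.rpow_inv_rpow (by positivity) htpos.ne'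
  set a : ℝ := r ^ (-s) with hadef
  set b : ℝ := γ * r ^ α with hbdef
  have hapos : 0 < a := Real.rpow_pos_of_pos hrpos _
  have hbpos : 0 < b := by
    have := Real.rpow_pos_of_pos hrpos α; positivity
  have hba : 2 * b < a := by
    have hsplit : r ^ α = r ^ (-s) * r ^ t := by
      rw [← Real.rpow_add hrpos, ht]; ring_nf
    have h1 : 2 * b = (2 * γ * (2 * γ + 1)⁻¹) * a := by
      rw [hbdef, hsplit, hrt]; ring
    have h2 : 2 * γ * (2 * γ + 1)⁻¹ < 1 := by
      rw [mul_inv_lt_iff₀ (by positivity)]; linarith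
    calc 2 * b = (2 * γ * (2 * γ + 1)⁻¹) * a := h1
      _ < 1 * a := by exact mul_lt_mul_of_pos_right h2 hapos
      _ = a := one_mul a
  -- the point x0
  have hd0 : 0 < d := hd
  set x0 : Esp d := r • EuclideanSpace.single (⟨0, hd0⟩ : Fin d) (1 : ℝ) with hx0def
  have hx0norm : ‖x0‖ = r := by
    rw [hx0def, norm_smul, EuclideanSpace.norm_single]
    simp [abs_of_pos hrpos]
  have hx0ne : x0 ≠ 0 := by
    intro h
    rw [h, norm_zero] at hx0norm
    exact hrpos.ne hx0norm
  set μ : Measure (Esp d) :=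
    (2 : ℝ≥0∞)⁻¹ • (Measure.dirac (0 : Esp d) + Measure.dirac x0) with hμdef
  have hprob : IsProbabilityMeasure μ := by
    constructor
    rw [hμdef]
    simp only [Measure.smul_apply, Measure.add_apply, measure_univ, smul_eq_mul]
    rw [one_add_one_eq_two, ENNReal.inv_mul_cancel two_ne_zero ENNReal.ofNat_ne_top]
  refine ⟨μ, hprob, ?_⟩
  rw [hEdirac]
  -- expand the product measure
  have hprod : μ.prod μ = ((2 : ℝ≥0∞)⁻¹ * 2⁻¹) •
      ((Measure.dirac ((0 : Esp d), (0 : Esp d)) + Measure.dirac ((0 : Esp d), x0))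
        + (Measure.dirac (x0, (0 : Esp d)) + Measure.dirac (x0, x0))) := by
    rw [hμdef, smul_prodAux, prod_smulAux _ (by simp) _ _, smul_smul,
      Measure.add_prod, Measure.prod_add, Measure.prod_add,
      Measure.dirac_prod_dirac, Measure.dirac_prod_dirac,
      Measure.dirac_prod_dirac, Measure.dirac_prod_dirac]
  -- values of the kernel
  have hK0x : rieszK d s ((0 : Esp d) - x0) = ((-a : ℝ) : EReal) := by
    rw [zero_sub]
    have hne : -x0 ≠ 0 := by simpa using hx0ne
    rw [rieszK, if_neg hne, if_neg (by linarith), if_neg hs2.ne]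
    rw [norm_neg, hx0norm]
  have hKx0 : rieszK d s (x0 - 0) = ((-a : ℝ) : EReal) := by
    rw [sub_zero, rieszK, if_neg hx0ne, if_neg (by linarith), if_neg hs2.ne, hx0norm]
  have hKxx : rieszK d s (x0 - x0) = 0 := by rw [sub_self, hK0]
  have hVx : γ * ‖x0‖ ^ α = b := by rw [hx0norm]
  -- the four values of the integrand
  set F : Esp d × Esp d → EReal := fun p =>
    rieszK d s (p.1 - p.2) + ((γ * ‖p.1‖ ^ α : ℝ) : EReal) + ((γ * ‖p.2‖ ^ α : ℝ) : EReal)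
    with hFdef
  have hF1 : F ((0 : Esp d), (0 : Esp d)) = ((0 : ℝ) : EReal) := by
    simp only [hFdef]; rw [hF00]; simp
  have hF2 : F ((0 : Esp d), x0) = ((b - a : ℝ) : EReal) := by
    simp only [hFdef]
    rw [hK0x, hV0, hVx]
    norm_cast
    push_cast
    ring
  have hF3 : F (x0, (0 : Esp d)) = ((b - a : ℝ) : EReal) := by
    simp only [hFdef]
    rw [hKx0, hV0, hVx]
    norm_cast
    push_cast
    ring
  have hF4 : F (x0, x0) = ((2 * b : ℝ) : EReal) := by
    simp only [hFdef]
    rw [hKxx, hVx]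
    norm_cast
    push_cast
    ring
  -- compute the two lintegrals
  have hcalc : ∀ G : EReal → ℝ≥0∞,
      (∫⁻ p : Esp d × Esp d, G (F p) ∂(μ.prod μ)) =
        (2 : ℝ≥0∞)⁻¹ * 2⁻¹ *
          (G ((0 : ℝ) : EReal) + G ((b - a : ℝ) : EReal)
            + (G ((b - a : ℝ) : EReal) + G ((2 * b : ℝ) : EReal))) := by
    intro G
    rw [hprod, lintegral_smul_measure, lintegral_add_measure, lintegral_add_measure,
      lintegral_add_measure, lintegral_dirac, lintegral_dirac, lintegral_dirac,
      lintegral_dirac, hF1, hF2, hF3, hF4, smul_eq_mul]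
  have hP : (∫⁻ p : Esp d × Esp d, erealPos (F p) ∂(μ.prod μ)) =
      (2 : ℝ≥0∞)⁻¹ * 2⁻¹ * ENNReal.ofReal (2 * b) := by
    rw [hcalc (fun x => erealPos x)]
    simp only [erealPos_coe]
    rw [ENNReal.ofReal_eq_zero.mpr (by linarith : b - a ≤ 0),
      ENNReal.ofReal_eq_zero.mpr le_rfl]
    ring
  have hN : (∫⁻ p : Esp d × Esp d, erealPos (-(F p)) ∂(μ.prod μ)) =
      (2 : ℝ≥0∞)⁻¹ * 2⁻¹ * (2 * ENNReal.ofReal (a - b)) := by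
    rw [hcalc (fun x => erealPos (-x))]
    simp only [← EReal.coe_neg, erealPos_coe]
    rw [ENNReal.ofReal_eq_zero.mpr (by linarith : -(2 * b) ≤ 0),
      ENNReal.ofReal_eq_zero.mpr (by norm_num : -(0:ℝ) ≤ 0)]
    rw [neg_sub]
    ring
  -- conclude
  unfold energy
  have hFrw : (fun p : Esp d × Esp d =>
      erealPos (rieszK d s (p.1 - p.2) + (((fun x => γ * ‖x‖ ^ α) p.1 : ℝ) : EReal)
        + (((fun x => γ * ‖x‖ ^ α) p.2 : ℝ) : EReal))) = fun p => erealPos (F p) := rfl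
  rw [show (fun x : Esp d => γ * ‖x‖ ^ α) = fun x => γ * ‖x‖ ^ α from rfl]
  rw [hP, hN]
  have h1 : (((2 : ℝ≥0∞)⁻¹ * 2⁻¹ * ENNReal.ofReal (2 * b) : ℝ≥0∞) : EReal)
      = ((4⁻¹ * (2 * b) : ℝ) : EReal) := coe_quarter_ofReal _ (by linarith)
  have hsimp2 : (2 : ℝ≥0∞)⁻¹ * 2⁻¹ * (2 * ENNReal.ofReal (a - b))
      = 2⁻¹ * ENNReal.ofReal (a - b) := by
    calc (2 : ℝ≥0∞)⁻¹ * 2⁻¹ * (2 * ENNReal.ofReal (a - b))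
        = 2⁻¹ * ((2⁻¹ * 2) * ENNReal.ofReal (a - b)) := by ring
      _ = 2⁻¹ * ENNReal.ofReal (a - b) := by
          rw [ENNReal.inv_mul_cancel two_ne_zero ENNReal.ofNat_ne_top, one_mul]
  have h2 : (((2 : ℝ≥0∞)⁻¹ * 2⁻¹ * (2 * ENNReal.ofReal (a - b)) : ℝ≥0∞) : EReal)
      = ((2⁻¹ * (a - b) : ℝ) : EReal) := by
    rw [hsimp2]; exact coe_half_ofReal _ (by linarith)
  rw [h1, h2, ← EReal.coe_sub]
  exact_mod_cast (by nlinarith : 4⁻¹ * (2 * b) - 2⁻¹ * (a - b) < (0:ℝ))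
end
end

section
/- Let d ≥ 4 be an integer and let s > −2 with s ≠ 0. Then for every λ ≥ 0 with λ ≠ 1, τ_{d−1}·∫_{−1}^{1} (1 − t²)^{(d−3)/2}·(λ² + 1 − 2λt)^{−s/2} dt = (1 + λ²)^{−s/2}·₂F₁(s/4, (s+2)/4; d/2; 4λ²/(1 + λ²)²). -/
open MeasureTheory Real
open scoped ENNReal

noncomputable section

lemma rf_zero (x : ℝ) : risingFact x 0 = 1 := by simp [risingFact]

lemma rf_succ (x : ℝ) (k : ℕ) : risingFact x (k + 1) = risingFact x k * (x + k) := by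
  simp [risingFact, ascPochhammer_succ_right]

lemma rf_pos {x : ℝ} (hx : 0 < x) : ∀ k, 0 < risingFact x k
  | 0 => by simp [rf_zero]
  | (k+1) => by
      rw [rf_succ]
      have h1 := rf_pos hx k
      have h2 : (0:ℝ) < x + k := by positivity
      positivity

lemma fact_two_mul (m : ℕ) :
    ((2 * m).factorial : ℝ) = 4 ^ m * m.factorial * risingFact (1/2) m := by
  induction m with
  | zero => simp [rf_zero]
  | succ n ih =>
    have key : (2 * (n+1)).factorial = (2*n+1+1) * ((2*n+1) * (2*n).factorial) := by
      rw [show 2*(n+1) = (2*n+1)+1 from by ring, Nat.factorial_succ, Nat.factorial_succ]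
    rw [key, rf_succ, Nat.factorial_succ]
    push_cast
    rw [ih]
    push_cast
    ring

lemma rf_two_mul (c : ℝ) (m : ℕ) :
    risingFact c (2 * m) = 4 ^ m * risingFact (c/2) m * risingFact ((c+1)/2) m := by
  induction m with
  | zero => simp [rf_zero]
  | succ n ih =>
    rw [show 2*(n+1) = (2*n+1)+1 from by ring, rf_succ,
        show (2*n+1) = (2*n)+1 from rfl, rf_succ, ih, rf_succ, rf_succ]
    push_cast
    ring

lemma Gamma_add_nat {x : ℝ} (hx : 0 < x) (k : ℕ) :
    Real.Gamma (x + k) = risingFact x k * Real.Gamma x := by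
  induction k with
  | zero => simp [rf_zero]
  | succ n ih =>
    have hpos : (0:ℝ) < x + n := by positivity
    rw [show x + ((n:ℕ)+1:ℕ) = (x + (n:ℕ)) + 1 from by push_cast; ring,
        Real.Gamma_add_one hpos.ne', ih, rf_succ]
    ring

lemma betaReal {u v : ℝ} (hu : 0 < u) (hv : 0 < v) :
    Real.Gamma u * Real.Gamma v
      = Real.Gamma (u + v) * ∫ x in (0:ℝ)..1, x ^ (u - 1) * (1 - x) ^ (v - 1) := by
  have h := Complex.Gamma_mul_Gamma_eq_betaIntegral (s := (u:ℂ)) (t := (v:ℂ))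
    (by simpa using hu) (by simpa using hv)
  rw [Complex.betaIntegral] at h
  have hint : (∫ (x : ℝ) in (0:ℝ)..1, (x:ℂ) ^ ((u:ℂ) - 1) * ((1:ℂ) - (x:ℂ)) ^ ((v:ℂ) - 1))
      = ((∫ x in (0:ℝ)..1, x ^ (u - 1) * (1 - x) ^ (v - 1) : ℝ) : ℂ) := by
    rw [← intervalIntegral.integral_ofReal]
    refine intervalIntegral.integral_congr fun x hx => ?_
    rw [Set.uIcc_of_le (by norm_num : (0:ℝ) ≤ 1)] at hx
    obtain ⟨hx0, hx1⟩ := hx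
    rw [show ((u:ℂ) - 1) = ((u - 1 : ℝ) : ℂ) from by push_cast; ring,
        show ((v:ℂ) - 1) = ((v - 1 : ℝ) : ℂ) from by push_cast; ring,
        show ((1:ℂ) - (x:ℂ)) = ((1 - x : ℝ):ℂ) from by push_cast; ring,
        ← Complex.ofReal_cpow hx0, ← Complex.ofReal_cpow (by linarith : (0:ℝ) ≤ 1 - x),
        ← Complex.ofReal_mul]
  rw [hint, Complex.Gamma_ofReal, Complex.Gamma_ofReal,
      show ((u:ℂ) + (v:ℂ)) = ((u + v : ℝ) : ℂ) from by push_cast; ring,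
      Complex.Gamma_ofReal, ← Complex.ofReal_mul, ← Complex.ofReal_mul] at h
  exact_mod_cast h

lemma cont_aux (α : ℝ) (hα : 0 ≤ α) (k : ℕ) :
    Continuous fun t : ℝ => t ^ k * (1 - t ^ 2) ^ α := by
  rw [← continuousOn_univ]
  exact (continuous_pow k).continuousOn.mul
    (((continuous_const.sub (continuous_pow 2)).continuousOn).rpow_const
      fun x _ => Or.inr hα)

lemma moment_odd (α : ℝ) (m : ℕ) :
    ∫ t in (-1:ℝ)..1, t ^ (2*m+1) * (1 - t ^ 2) ^ α = 0 := by
  set f : ℝ → ℝ := fun t => t ^ (2*m+1) * (1 - t ^ 2) ^ α with hf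
  have h1 : (∫ t in (-1:ℝ)..1, f (-t)) = ∫ t in (-1:ℝ)..1, f t := by
    simpa using intervalIntegral.integral_comp_neg (a := (-1:ℝ)) (b := 1) f
  have h2 : ∀ t : ℝ, f (-t) = - f t := by
    intro t
    simp only [hf]
    rw [Odd.neg_pow ⟨m, by ring⟩, neg_sq]
    ring
  simp only [h2, intervalIntegral.integral_neg] at h1
  linarith

lemma moment_even (α : ℝ) (hα : 0 ≤ α) (m : ℕ) :
    ∫ t in (-1:ℝ)..1, t ^ (2*m) * (1 - t ^ 2) ^ α
      = Real.Gamma ((m:ℝ) + 1/2) * Real.Gamma (α + 1)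
        / Real.Gamma ((m:ℝ) + 1/2 + (α + 1)) := by
  set f : ℝ → ℝ := fun t => t ^ (2*m) * (1 - t ^ 2) ^ α with hf
  have hc : Continuous f := cont_aux α hα (2*m)
  -- even function: integral over [-1,1] is twice that over [0,1]
  have heven : (∫ t in (-1:ℝ)..1, f t) = 2 * ∫ t in (0:ℝ)..1, f t := by
    have h1 : (∫ t in (0:ℝ)..1, f (-t)) = ∫ t in (-1:ℝ)..0, f t := by
      simpa using intervalIntegral.integral_comp_neg (a := (0:ℝ)) (b := 1) f
    have h2 : ∀ t : ℝ, f (-t) = f t := by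
      intro t; simp only [hf]
      rw [Even.neg_pow ⟨m, by ring⟩, neg_sq]
    simp only [h2] at h1
    have h3 := intervalIntegral.integral_add_adjacent_intervals
      (a := (-1:ℝ)) (b := 0) (c := 1) (μ := volume)
      (hc.intervalIntegrable _ _) (hc.intervalIntegrable _ _)
    rw [← h3, ← h1]; ring
  -- substitution x = t^2 on (0,1)
  set g : ℝ → ℝ := fun x => x ^ ((m:ℝ) - 1/2) * (1 - x) ^ α with hg
  have himg : (fun t : ℝ => t^2) '' Set.Ioo 0 1 = Set.Ioo (0:ℝ) 1 := by
    ext x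
    simp only [Set.mem_image, Set.mem_Ioo]
    constructor
    · rintro ⟨t, ⟨ht0, ht1⟩, rfl⟩
      exact ⟨by positivity, by nlinarith⟩
    · rintro ⟨hx0, hx1⟩
      exact ⟨Real.sqrt x, ⟨Real.sqrt_pos.mpr hx0,
        by nlinarith [Real.sq_sqrt hx0.le, Real.sqrt_nonneg x]⟩, Real.sq_sqrt hx0.le⟩
  have hsub : (∫ x in Set.Ioo (0:ℝ) 1, g x) = ∫ t in Set.Ioo (0:ℝ) 1, 2 * f t := by
    have hderiv : ∀ t ∈ Set.Ioo (0:ℝ) 1,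
        HasDerivWithinAt (fun t : ℝ => t^2) (2*t) (Set.Ioo 0 1) t := by
      intro t _
      simpa using (hasDerivAt_pow 2 t).hasDerivWithinAt
    have hinj : Set.InjOn (fun t : ℝ => t^2) (Set.Ioo 0 1) := by
      intro a ha b hb hab
      have h0 : (a - b) * (a + b) = 0 := by simp only at hab; nlinarith
      rcases mul_eq_zero.mp h0 with h | h
      · linarith
      · nlinarith [ha.1, hb.1]
    have := integral_image_eq_integral_abs_deriv_smul measurableSet_Ioo hderiv hinj g
    rw [himg] at this
    rw [this]
    refine setIntegral_congr_fun measurableSet_Ioo fun t ht => ?_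
    obtain ⟨ht0, ht1⟩ := ht
    have h2t : |2 * t| = 2 * t := abs_of_pos (by linarith)
    simp only [smul_eq_mul, h2t, hg, hf]
    -- (t^2) ^ ((m:ℝ) - 1/2) = t ^ (2*m) / t
    have hrw : ((t^2 : ℝ)) ^ ((m:ℝ) - 1/2) * t = t ^ (2*m) := by
      rw [← Real.rpow_natCast t 2, ← Real.rpow_mul ht0.le, ← Real.rpow_natCast t (2*m),
          ← Real.rpow_add_one ht0.ne']
      push_cast
      ring_nf
    calc 2 * t * ((t^2) ^ ((m:ℝ) - 1/2) * (1 - t^2) ^ α)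
        = ((t^2 : ℝ)) ^ ((m:ℝ) - 1/2) * t * (2 * (1 - t^2) ^ α) := by ring
      _ = t ^ (2*m) * (2 * (1 - t^2) ^ α) := by rw [hrw]
      _ = 2 * (t ^ (2*m) * (1 - t^2) ^ α) := by ring
  have hioo : (∫ t in (0:ℝ)..1, f t) = ∫ t in Set.Ioo (0:ℝ) 1, f t := by
    rw [intervalIntegral.integral_of_le (by norm_num : (0:ℝ) ≤ 1),
        integral_Ioc_eq_integral_Ioo]
  have hioo2 : (∫ x in (0:ℝ)..1, x ^ ((m:ℝ) + 1/2 - 1) * (1 - x) ^ ((α + 1) - 1))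
      = ∫ x in Set.Ioo (0:ℝ) 1, g x := by
    rw [intervalIntegral.integral_of_le (by norm_num : (0:ℝ) ≤ 1),
        integral_Ioc_eq_integral_Ioo]
    refine setIntegral_congr_fun measurableSet_Ioo fun x _ => ?_
    rw [show (m:ℝ) + 1/2 - 1 = (m:ℝ) - 1/2 from by ring,
        show α + 1 - 1 = α from by ring]
  have hbeta := betaReal (u := (m:ℝ) + 1/2) (v := α + 1)
    (by positivity) (by linarith)
  have hΓpos : 0 < Real.Gamma ((m:ℝ) + 1/2 + (α + 1)) :=
    Real.Gamma_pos_of_pos (by positivity)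
  rw [hioo2, hsub, integral_const_mul, ← hioo] at hbeta
  show (∫ t in (-1:ℝ)..1, f t) = _
  rw [heven, eq_div_iff hΓpos.ne']
  linarith [hbeta]

lemma coeff_succ (c : ℝ) (k : ℕ) :
    risingFact c (k+1) / ((k+1).factorial : ℝ)
      = risingFact c k / (k.factorial : ℝ) * ((c + k) / ((k:ℝ) + 1)) := by
  rw [rf_succ, Nat.factorial_succ]
  push_cast
  rw [div_mul_div_comm]
  ring_nf

open Filter in
lemma ratio_bound (c : ℝ) {u r : ℝ} (hu0 : 0 ≤ u) (hur : u < r) :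
    ∀ᶠ k : ℕ in atTop, |c + (k:ℝ)| * u ≤ r * k := by
  have hrpos : 0 < r - u := by linarith
  filter_upwards [Filter.eventually_ge_atTop ⌈|c| * u / (r - u)⌉₊] with k hk
  have hkN : (⌈|c| * u / (r - u)⌉₊ : ℝ) ≤ k := Nat.cast_le.mpr hk
  have hNc : |c| * u / (r - u) ≤ (⌈|c| * u / (r - u)⌉₊ : ℝ) := Nat.le_ceil _
  have hcu : |c| * u ≤ (k : ℝ) * (r - u) := by
    rw [div_le_iff₀ hrpos] at hNc
    nlinarith
  have h1 : |c + (k:ℝ)| ≤ |c| + k :=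
    (abs_add_le _ _).trans (by rw [abs_of_nonneg (by positivity : (0:ℝ) ≤ (k:ℝ))])
  nlinarith

lemma summable_binom (c : ℝ) {u : ℝ} (hu0 : 0 ≤ u) (hu1 : u < 1) :
    Summable fun k : ℕ => |risingFact c k / (k.factorial : ℝ)| * u ^ k := by
  set r : ℝ := (1 + u) / 2 with hr
  have hur : u < r := by rw [hr]; linarith
  have hr1 : r < 1 := by rw [hr]; linarith
  have hr0 : 0 ≤ r := le_trans hu0 hur.le
  refine summable_of_ratio_norm_eventually_le (r := r) hr1 ?_
  filter_upwards [ratio_bound c hu0 hur] with k hk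
  rw [Real.norm_of_nonneg (by positivity), Real.norm_of_nonneg (by positivity),
      coeff_succ, abs_mul (risingFact c k / _), abs_div (c + (k:ℝ)) ((k:ℝ)+1),
      abs_of_nonneg (by positivity : (0:ℝ) ≤ (k:ℝ)+1), pow_succ]
  have hk1 : (0:ℝ) < (k:ℝ) + 1 := by positivity
  have h2 : |c + (k:ℝ)| / ((k:ℝ)+1) * u ≤ r := by
    rw [div_mul_eq_mul_div, div_le_iff₀ hk1]
    nlinarith [Nat.cast_nonneg (α := ℝ) k]
  calc |risingFact c k / (k.factorial : ℝ)| * (|c + (k:ℝ)| / ((k:ℝ)+1)) * (u^k * u)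
      = (|risingFact c k / (k.factorial:ℝ)| * u ^ k) * (|c + (k:ℝ)| / ((k:ℝ)+1) * u) := by
        ring
    _ ≤ (|risingFact c k / (k.factorial:ℝ)| * u ^ k) * r :=
        mul_le_mul_of_nonneg_left h2 (by positivity)
    _ = r * (|risingFact c k / (k.factorial:ℝ)| * u ^ k) := by ring

lemma summable_binom_deriv (c : ℝ) {u : ℝ} (hu0 : 0 ≤ u) (hu1 : u < 1) :
    Summable fun k : ℕ => |risingFact c k / (k.factorial : ℝ)| * ((k:ℝ) * u ^ (k-1)) := by
  set r : ℝ := (1 + u) / 2 with hr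
  have hur : u < r := by rw [hr]; linarith
  have hr1 : r < 1 := by rw [hr]; linarith
  refine summable_of_ratio_norm_eventually_le (r := r) hr1 ?_
  filter_upwards [ratio_bound c hu0 hur, Filter.eventually_ge_atTop 1] with k hk hk1
  rw [Real.norm_of_nonneg (by positivity), Real.norm_of_nonneg (by positivity),
      coeff_succ, abs_mul (risingFact c k / _), abs_div (c + (k:ℝ)) ((k:ℝ)+1),
      abs_of_nonneg (by positivity : (0:ℝ) ≤ (k:ℝ)+1)]
  have hpow : u ^ (k + 1 - 1) = u ^ (k - 1) * u := by
    obtain ⟨j, rfl⟩ := Nat.exists_eq_add_of_le hk1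
    rw [show 1 + j + 1 - 1 = j + 1 from by omega, show 1 + j - 1 = j from by omega, pow_succ]
  rw [hpow]
  have hk1' : (0:ℝ) < (k:ℝ) + 1 := by positivity
  push_cast
  calc |risingFact c k / (k.factorial : ℝ)| * (|c + (k:ℝ)| / ((k:ℝ)+1)) *
        (((k:ℝ)+1) * (u ^ (k-1) * u))
      = |risingFact c k / (k.factorial:ℝ)| * u ^ (k-1) * (|c + (k:ℝ)| * u) := by
        field_simp
    _ ≤ |risingFact c k / (k.factorial:ℝ)| * u ^ (k-1) * (r * k) :=
        mul_le_mul_of_nonneg_left hk (by positivity)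
    _ = r * (|risingFact c k / (k.factorial:ℝ)| * ((k:ℝ) * u ^ (k-1))) := by ring

lemma hasSum_binomial (c : ℝ) {x : ℝ} (hx : |x| < 1) :
    HasSum (fun k : ℕ => risingFact c k / (k.factorial : ℝ) * x ^ k) ((1 - x) ^ (-c)) := by
  set a : ℕ → ℝ := fun k => risingFact c k / (k.factorial : ℝ) with ha
  set r : ℝ := (1 + |x|) / 2 with hr
  have hxr : |x| < r := by rw [hr]; linarith
  have hr1 : r < 1 := by rw [hr]; linarith
  have hr0 : 0 < r := lt_of_le_of_lt (abs_nonneg x) hxr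
  -- summability at any point with |y| ≤ r
  have hsum_at : ∀ y : ℝ, |y| ≤ r → Summable (fun k => a k * y ^ k) := by
    intro y hy
    refine Summable.of_norm_bounded (summable_binom c hr0.le hr1) fun k => ?_
    rw [norm_mul, norm_pow, Real.norm_eq_abs, Real.norm_eq_abs]
    exact mul_le_mul_of_nonneg_left (pow_le_pow_left₀ (abs_nonneg y) hy k) (abs_nonneg _)
  set t : Set ℝ := Set.Ioo (-r) r with htdef
  have hmem : ∀ {y : ℝ}, |y| < r → y ∈ t := fun hy => Set.mem_Ioo.mpr (abs_lt.mp hy)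
  have hmemabs : ∀ {y : ℝ}, y ∈ t → |y| < r := fun hy => abs_lt.mpr (Set.mem_Ioo.mp hy)
  set F : ℝ → ℝ := fun y => ∑' k, a k * y ^ k with hF
  set D : ℝ → ℝ := fun y => ∑' k, a k * ((k:ℝ) * y ^ (k-1)) with hD
  -- term-by-term differentiation
  have hbound : ∀ (k : ℕ) (y : ℝ), y ∈ t →
      ‖a k * ((k:ℝ) * y ^ (k-1))‖ ≤ |a k| * ((k:ℝ) * r ^ (k-1)) := by
    intro k y hy
    rw [norm_mul, norm_mul, norm_pow, Real.norm_eq_abs, Real.norm_eq_abs, Real.norm_eq_abs,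
        Nat.abs_cast k]
    have := pow_le_pow_left₀ (abs_nonneg y) (hmemabs hy).le (k-1)
    gcongr
  have hder : ∀ y ∈ t, HasDerivAt F (D y) y := by
    intro y hy
    exact hasDerivAt_tsum_of_isPreconnected
      (summable_binom_deriv c hr0.le hr1) isOpen_Ioo (convex_Ioo _ _).isPreconnected
      (fun k z _ => by simpa using (hasDerivAt_pow k z).const_mul (a k))
      hbound (Set.mem_Ioo.mpr ⟨by linarith, hr0⟩)
      (summable_of_ne_finset_zero (s := {0}) fun k hk => by
        simp [zero_pow (by simpa using hk)])
      hy
  -- the ODE (1 - y) * D y = c * F y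
  have hODE : ∀ y ∈ t, (1 - y) * D y = c * F y := by
    intro y hy
    have hy' := (hmemabs hy).le
    have hDsum : Summable fun k => a k * ((k:ℝ) * y ^ (k-1)) :=
      Summable.of_norm_bounded (summable_binom_deriv c hr0.le hr1)
        fun k => hbound k y hy
    have hTsum : Summable fun k => a k * (k:ℝ) * y ^ k := by
      refine Summable.of_norm_bounded
        ((summable_binom_deriv c hr0.le hr1).mul_right r) fun k => ?_
      rw [norm_mul, norm_mul, norm_pow, Real.norm_eq_abs, Real.norm_eq_abs, Real.norm_eq_abs,
          Nat.abs_cast k]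
      rcases Nat.eq_zero_or_pos k with rfl | hk
      · simp
      · have hpow : |y| ^ k ≤ r ^ (k-1) * r := by
          rw [← pow_succ, Nat.sub_add_cancel hk]
          exact pow_le_pow_left₀ (abs_nonneg y) hy' k
        calc |a k| * (k:ℝ) * |y| ^ k ≤ |a k| * (k:ℝ) * (r ^ (k-1) * r) := by
              gcongr
          _ = |a k| * ((k:ℝ) * r ^ (k-1)) * r := by ring
    have hFsum := hsum_at y hy'
    -- shift the index in D y
    have hshift : D y = ∑' k, a (k+1) * (((k:ℕ)+1:ℝ) * y ^ k) := by
      rw [show D y = ∑' k, a k * ((k:ℝ) * y ^ (k-1)) from rfl, Summable.tsum_eq_zero_add hDsum]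
      simp
    have hkey : ∀ k : ℕ, a (k+1) * (((k:ℕ)+1:ℝ) * y ^ k) = c * (a k * y ^ k) + a k * (k:ℝ) * y ^ k := by
      intro k
      have h := coeff_succ c k
      rw [ha]
      simp only
      rw [h]
      have : ((k:ℝ) + 1) ≠ 0 := by positivity
      field_simp
    have hDval : D y = c * F y + ∑' k, a k * (k:ℝ) * y ^ k := by
      rw [hshift, tsum_congr hkey, Summable.tsum_add (hFsum.mul_left c) hTsum, tsum_mul_left]
    have hyD : y * D y = ∑' k, a k * (k:ℝ) * y ^ k := by
      rw [show D y = ∑' k, a k * ((k:ℝ) * y ^ (k-1)) from rfl, ← tsum_mul_left]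
      refine tsum_congr fun k => ?_
      rcases Nat.eq_zero_or_pos k with rfl | hk
      · simp
      · rw [show y * (a k * ((k:ℝ) * y ^ (k-1))) = a k * (k:ℝ) * (y ^ (k-1) * y) from by ring,
            ← pow_succ, Nat.sub_add_cancel hk]
    rw [sub_mul, one_mul, hyD, hDval]
    ring
  -- H = (1-y)^c * F y has zero derivative on t
  set H : ℝ → ℝ := fun y => (1 - y) ^ c * F y with hH
  have hHder : ∀ y ∈ t, HasDerivAt H 0 y := by
    intro y hy
    have h1y : 0 < 1 - y := by
      have := (hmemabs hy).trans_le hr1.le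
      have := (abs_lt.mp ((hmemabs hy).trans hr1)).2
      linarith
    have hrp : HasDerivAt (fun z : ℝ => (1 - z) ^ c) (-1 * c * (1 - y) ^ (c - 1)) y := by
      have hid : HasDerivAt (fun z : ℝ => 1 - z) (-1) y := (hasDerivAt_id y).const_sub 1
      exact hid.rpow_const (Or.inl h1y.ne')
    have hmul := hrp.mul (hder y hy)
    have hval : -1 * c * (1 - y) ^ (c - 1) * F y + (1 - y) ^ c * D y = 0 := by
      have hc1 : (1 - y) ^ c = (1 - y) ^ (c - 1) * (1 - y) := by
        rw [← Real.rpow_add_one h1y.ne' (c - 1), sub_add_cancel]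
      rw [hc1, show -1 * c * (1-y)^(c-1) * F y + (1-y)^(c-1) * (1-y) * D y
            = (1-y)^(c-1) * ((1 - y) * D y - c * F y) from by ring, hODE y hy]
      ring
    rw [hval] at hmul
    exact hmul
  -- H is constant on t
  have hx_mem : x ∈ t := hmem hxr
  have h0_mem : (0:ℝ) ∈ t := hmem (by simpa using hr0)
  have hconst : H x = H 0 := by
    refine (convex_Ioo (-r) r).is_const_of_fderivWithin_eq_zero
      (fun y hy => ((hHder y hy).differentiableAt.differentiableWithinAt)) ?_ hx_mem h0_mem
    intro y hy
    rw [fderivWithin_of_isOpen isOpen_Ioo hy]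
    have := (hHder y hy).hasFDerivAt
    rw [this.fderiv]
    ext z
    simp
  have hF0 : F 0 = 1 := by
    rw [show F 0 = ∑' k : ℕ, a k * (0:ℝ) ^ k from rfl,
        tsum_eq_single 0 (fun k hk => by simp [zero_pow hk])]
    simp [ha, rf_zero]
  have hH0 : H 0 = 1 := by rw [hH]; simp [hF0]
  have h1x : 0 < 1 - x := by
    have := (abs_lt.mp hx).2
    linarith
  have hFx : F x = (1 - x) ^ (-c) := by
    have h : (1 - x) ^ c * F x = 1 := hconst.trans hH0
    rw [Real.rpow_neg h1x.le]
    exact eq_inv_of_mul_eq_one_left (by linarith [h])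
  rw [← hFx]
  exact (hsum_at x hxr.le).hasSum

theorem statement19 (d : ℕ) (hd : 4 ≤ d) (s lam : ℝ)
    (hs1 : -2 < s) (hs2 : s ≠ 0) (hlam0 : 0 ≤ lam) (hlam1 : lam ≠ 1) :
    tau d * ∫ t in (-1 : ℝ)..1,
        (1 - t ^ 2) ^ (((d : ℝ) - 3) / 2) * (lam ^ 2 + 1 - 2 * lam * t) ^ (-s / 2)
      = (1 + lam ^ 2) ^ (-s / 2)
        * hyp2F1 (s / 4) ((s + 2) / 4) ((d : ℝ) / 2) (4 * lam ^ 2 / (1 + lam ^ 2) ^ 2) := by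
  have hd4 : (4:ℝ) ≤ (d:ℝ) := by exact_mod_cast hd
  set α : ℝ := ((d : ℝ) - 3) / 2 with hαdef
  have hα : 0 ≤ α := by rw [hαdef]; linarith
  have hden : (0:ℝ) < 1 + lam ^ 2 := by positivity
  set u : ℝ := 2 * lam / (1 + lam ^ 2) with hu
  have hu0 : 0 ≤ u := by positivity
  have hu1 : u < 1 := by
    rw [hu, div_lt_one hden]
    have h1 : (1 - lam) ≠ 0 := sub_ne_zero.mpr fun h => hlam1 h.symm
    have h2 : 0 < (1 - lam) ^ 2 := by positivity
    nlinarith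
  set a : ℕ → ℝ := fun k => risingFact (s/2) k / (k.factorial : ℝ) with ha
  -- pointwise series expansion of the kernel
  have key : Set.EqOn (fun t => (1 - t ^ 2) ^ α * (lam ^ 2 + 1 - 2 * lam * t) ^ (-s / 2))
      (fun t => (1 + lam ^ 2) ^ (-s / 2) *
        ∑' k : ℕ, (a k * u ^ k) * (t ^ k * (1 - t ^ 2) ^ α))
      (Set.Ioc (-1 : ℝ) 1) := by
    intro t ht
    obtain ⟨ht1, ht2⟩ := ht
    have htabs : |t| ≤ 1 := abs_le.mpr ⟨ht1.le, ht2⟩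
    have habs : |u * t| < 1 := by
      rw [abs_mul, abs_of_nonneg hu0]
      calc u * |t| ≤ u * 1 := mul_le_mul_of_nonneg_left htabs hu0
        _ < 1 := by linarith
    have hb := hasSum_binomial (s/2) habs
    have h1ut : 0 < 1 - u * t := by
      have := (abs_lt.mp habs).2
      linarith
    have hfac : lam ^ 2 + 1 - 2 * lam * t = (1 + lam ^ 2) * (1 - u * t) := by
      rw [hu]
      field_simp
      ring
    have hts : (∑' k : ℕ, (a k * u ^ k) * (t ^ k * (1 - t ^ 2) ^ α))
        = (1 - t ^ 2) ^ α * ((1 - u * t) ^ (-(s/2))) := by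
      rw [← hb.tsum_eq, ← tsum_mul_left]
      exact tsum_congr fun k => by rw [mul_pow]; ring
    simp only
    rw [hts, hfac, Real.mul_rpow hden.le h1ut.le,
        show (-s/2 : ℝ) = -(s/2) from by ring]
    ring
  -- uniform bound on the polynomial factor
  have hone : ∀ (k : ℕ), ∀ t ∈ Set.Ioc (-1:ℝ) 1, ‖t ^ k * (1 - t ^ 2) ^ α‖ ≤ 1 := by
    intro k t ht
    obtain ⟨ht1, ht2⟩ := ht
    have htabs : |t| ≤ 1 := abs_le.mpr ⟨ht1.le, ht2⟩
    have htsq : t ^ 2 ≤ 1 := by nlinarith [sq_abs t, abs_nonneg t]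
    have h1 : (0:ℝ) ≤ 1 - t ^ 2 := by linarith
    have h2 : (1 - t^2 : ℝ) ^ α ≤ 1 := Real.rpow_le_one h1 (by nlinarith [sq_nonneg t]) hα
    have h3 : |t| ^ k ≤ 1 := pow_le_one₀ (abs_nonneg t) htabs
    rw [norm_mul, Real.norm_eq_abs, Real.norm_eq_abs, abs_pow,
        abs_of_nonneg (Real.rpow_nonneg h1 α)]
    calc |t|^k * (1-t^2)^α ≤ 1 * 1 := mul_le_mul h3 h2 (Real.rpow_nonneg h1 α) zero_le_one
      _ = 1 := by norm_num
  have hmeas : ∀ k : ℕ, AEStronglyMeasurable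
      (fun t : ℝ => (a k * u ^ k) * (t ^ k * (1 - t ^ 2) ^ α))
      (volume.restrict (Set.Ioc (-1:ℝ) 1)) :=
    fun k => (continuous_const.mul (cont_aux α hα k)).aestronglyMeasurable
  have hptbound : ∀ (k : ℕ), ∀ t ∈ Set.Ioc (-1:ℝ) 1,
      ‖(a k * u ^ k) * (t ^ k * (1 - t ^ 2) ^ α)‖ ≤ |a k| * u ^ k := by
    intro k t ht
    rw [norm_mul]
    calc ‖a k * u ^ k‖ * ‖t ^ k * (1 - t ^ 2) ^ α‖
        ≤ ‖a k * u ^ k‖ * 1 := mul_le_mul_of_nonneg_left (hone k t ht) (norm_nonneg _)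
      _ = |a k| * u ^ k := by
          rw [mul_one, norm_mul, Real.norm_eq_abs, Real.norm_eq_abs, abs_pow,
              abs_of_nonneg hu0]
  have hlint : (∑' k : ℕ, ∫⁻ t in Set.Ioc (-1:ℝ) 1,
      ‖(a k * u ^ k) * (t ^ k * (1 - t ^ 2) ^ α)‖₊) ≠ ⊤ := by
    have hb1 : ∀ k : ℕ, (∫⁻ t in Set.Ioc (-1:ℝ) 1,
        ‖(a k * u ^ k) * (t ^ k * (1 - t ^ 2) ^ α)‖₊)
          ≤ ENNReal.ofReal (|a k| * u ^ k) * ENNReal.ofReal 2 := by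
      intro k
      calc (∫⁻ t in Set.Ioc (-1:ℝ) 1, ‖(a k * u ^ k) * (t ^ k * (1 - t ^ 2) ^ α)‖₊)
          ≤ ∫⁻ _ in Set.Ioc (-1:ℝ) 1, ENNReal.ofReal (|a k| * u ^ k) := by
            refine setLIntegral_mono measurable_const fun t ht => ?_
            rw [← enorm_eq_nnnorm, ← ofReal_norm]
            exact ENNReal.ofReal_le_ofReal (hptbound k t ht)
        _ = ENNReal.ofReal (|a k| * u ^ k) * volume (Set.Ioc (-1:ℝ) 1) := by
            rw [setLIntegral_const]
        _ = ENNReal.ofReal (|a k| * u ^ k) * ENNReal.ofReal 2 := by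
            rw [Real.volume_Ioc]
            norm_num
    refine ne_top_of_le_ne_top ?_ (ENNReal.tsum_le_tsum hb1)
    rw [ENNReal.tsum_mul_right]
    refine ENNReal.mul_ne_top ?_ ENNReal.ofReal_ne_top
    rw [← ENNReal.ofReal_tsum_of_nonneg (fun k => by positivity)
        (summable_binom (s/2) hu0 hu1)]
    exact ENNReal.ofReal_ne_top
  have hInt : (∫ t in (-1:ℝ)..1, (1 - t ^ 2) ^ α * (lam ^ 2 + 1 - 2 * lam * t) ^ (-s / 2))
      = (1 + lam ^ 2) ^ (-s / 2) *
          ∑' k : ℕ, ((a k * u ^ k) * ∫ t in (-1:ℝ)..1, t ^ k * (1 - t ^ 2) ^ α) := by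
    rw [intervalIntegral.integral_of_le (by norm_num : (-1:ℝ) ≤ 1)]
    rw [setIntegral_congr_fun measurableSet_Ioc key]
    rw [integral_const_mul]
    congr 1
    rw [integral_tsum hmeas hlint]
    refine tsum_congr fun k => ?_
    rw [integral_const_mul, intervalIntegral.integral_of_le (by norm_num : (-1:ℝ) ≤ 1)]
  rw [hInt]
  rw [show tau d * ((1 + lam ^ 2) ^ (-s / 2) *
        ∑' k : ℕ, ((a k * u ^ k) * ∫ t in (-1:ℝ)..1, t ^ k * (1 - t ^ 2) ^ α))
      = (1 + lam ^ 2) ^ (-s / 2) * (tau d *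
        ∑' k : ℕ, ((a k * u ^ k) * ∫ t in (-1:ℝ)..1, t ^ k * (1 - t ^ 2) ^ α)) from by ring]
  congr 1
  rw [← tsum_mul_left]
  -- bound on the moments, for summability
  have hMbound : ∀ k : ℕ, ‖∫ t in (-1:ℝ)..1, t ^ k * (1 - t ^ 2) ^ α‖ ≤ 2 := by
    intro k
    have h := intervalIntegral.norm_integral_le_of_norm_le_const
      (a := (-1:ℝ)) (b := 1) (C := 1)
      (f := fun t => t ^ k * (1 - t ^ 2) ^ α)
      (fun t ht => hone k t (by rwa [Set.uIoc_of_le (by norm_num : (-1:ℝ) ≤ 1)] at ht))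
    calc ‖∫ t in (-1:ℝ)..1, t ^ k * (1 - t ^ 2) ^ α‖
        ≤ 1 * |1 - (-1:ℝ)| := h
      _ = 2 := by norm_num
  set G : ℕ → ℝ := fun k =>
    tau d * ((a k * u ^ k) * ∫ t in (-1:ℝ)..1, t ^ k * (1 - t ^ 2) ^ α) with hG
  have hsumG : Summable G := by
    refine Summable.of_norm_bounded
      (((summable_binom (s/2) hu0 hu1).mul_left (|tau d| * 2))) fun k => ?_
    rw [hG]
    simp only
    rw [norm_mul, norm_mul, Real.norm_eq_abs, Real.norm_eq_abs]
    calc |tau d| * (|a k * u ^ k| * ‖∫ t in (-1:ℝ)..1, t ^ k * (1 - t ^ 2) ^ α‖)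
        ≤ |tau d| * (|a k * u ^ k| * 2) := by
          gcongr
          exact hMbound k
      _ = |tau d| * 2 * (|a k| * u ^ k) := by
          rw [abs_mul, abs_pow, abs_of_nonneg hu0]
          ring
  -- value of even terms
  have hd2pos : (0:ℝ) < (d:ℝ)/2 := by linarith
  have heven_val : ∀ m : ℕ, G (2*m)
      = (risingFact (s/4) m * risingFact ((s+2)/4) m)
          / (risingFact ((d:ℝ)/2) m * (m.factorial : ℝ))
        * (4 * lam ^ 2 / (1 + lam ^ 2) ^ 2) ^ m := by
    intro m
    rw [hG]
    simp only
    rw [moment_even α hα m]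
    have e1 : Real.Gamma ((m:ℝ) + 1/2) = risingFact (1/2) m * Real.Gamma (1/2) := by
      rw [add_comm]
      exact Gamma_add_nat (by norm_num) m
    have e2 : Real.Gamma ((m:ℝ) + 1/2 + (α + 1))
        = risingFact ((d:ℝ)/2) m * Real.Gamma ((d:ℝ)/2) := by
      rw [show (m:ℝ) + 1/2 + (α + 1) = (d:ℝ)/2 + m from by rw [hαdef]; ring]
      exact Gamma_add_nat hd2pos m
    have e3 : α + 1 = ((d:ℝ) - 1)/2 := by rw [hαdef]; ring
    have e4 : a (2*m) = (4:ℝ) ^ m * risingFact (s/4) m * risingFact ((s+2)/4) m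
        / ((4:ℝ) ^ m * (m.factorial : ℝ) * risingFact (1/2) m) := by
      rw [ha]
      simp only
      rw [rf_two_mul (s/2) m, fact_two_mul m,
          show (s/2)/2 = s/4 from by ring, show (s/2+1)/2 = (s+2)/4 from by ring]
    have e5 : u ^ (2*m) = (4 * lam ^ 2 / (1 + lam ^ 2) ^ 2) ^ m := by
      rw [pow_mul, hu]
      congr 1
      rw [div_pow]
      ring_nf
    have hg1 : (0:ℝ) < Real.Gamma (1/2) := Real.Gamma_pos_of_pos (by norm_num)
    have hg2 : (0:ℝ) < Real.Gamma (((d:ℝ) - 1)/2) := Real.Gamma_pos_of_pos (by linarith)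
    have hg3 : (0:ℝ) < Real.Gamma ((d:ℝ)/2) := Real.Gamma_pos_of_pos hd2pos
    have hp1 : (0:ℝ) < risingFact (1/2) m := rf_pos (by norm_num) m
    have hp2 : (0:ℝ) < risingFact ((d:ℝ)/2) m := rf_pos hd2pos m
    have hf : ((m.factorial : ℝ)) ≠ 0 := Nat.cast_ne_zero.mpr (Nat.factorial_ne_zero m)
    have h4 : ((4:ℝ) ^ m) ≠ 0 := by positivity
    rw [e4, e5, e1, e2, e3, tau]
    field_simp
  have hodd_val : ∀ m : ℕ, G (2*m+1) = 0 := by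
    intro m
    rw [hG]
    simp only
    rw [moment_odd α m]
    ring
  -- combine even and odd parts
  have hEsum : Summable (fun m => G (2*m)) :=
    hsumG.comp_injective fun x y h => by omega
  have hOdd : HasSum (fun m => G (2*m+1)) 0 := by
    rw [show (fun m => G (2*m+1)) = fun _ => (0:ℝ) from funext hodd_val]
    exact hasSum_zero
  have htot := hEsum.hasSum.even_add_odd hOdd
  rw [add_zero] at htot
  have h1 : ∑' k, G k = ∑' m, G (2*m) := (htot.tsum_eq).symm ▸ rfl
  calc (∑' k, G k) = ∑' m, G (2*m) := htot.tsum_eq.symm ▸ rfl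
    _ = hyp2F1 (s / 4) ((s + 2) / 4) ((d : ℝ) / 2) (4 * lam ^ 2 / (1 + lam ^ 2) ^ 2) := by
        rw [hyp2F1]
        exact tsum_congr heven_val

end
end
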